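/- In a time-dependent network on a finite vertex set, for all vertices s and d and every time t, the end-to-end arrival function value A_{(s,d)}(t) equals the minimum of A_P(t) over the finitely many walks P from s to d with no repeated vertices; in particular, the infimum defining A_{(s,d)}(t) is attained by such a walk. -/

import Mathlib

open scoped ENNReal

/-- Arrival function of a walk: starting at `u` and then visiting the vertices of `l` in
order, departing at time `t`. -/
def walkArr {V : Type*} (A : V → V → ℝ≥0∞ → ℝ≥0∞) : V → List V → ℝ≥0∞ → ℝ≥0∞
  | _, [], t => t
  | u, v :: l, t => walkArr A v l (A u v t)

/-- `l` (together with start vertex `s`) encodes a walk from `s` to `d`: the walk is the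
nonempty vertex sequence `s :: l`, whose last vertex must be `d`. -/
def IsWalkTo {V : Type*} (s d : V) (l : List V) : Prop :=
  (s :: l).getLast (List.cons_ne_nil _ _) = d

/-- The end-to-end arrival function: infimum over all walks from `s` to `d`. -/
noncomputable def endToEnd {V : Type*} (A : V → V → ℝ≥0∞ → ℝ≥0∞) (s d : V) (t : ℝ≥0∞) :
    ℝ≥0∞ :=
  ⨅ l : {l : List V // IsWalkTo s d l}, walkArr A s l.1 t

/-- The FIFO conditions on a time-dependent network: each edge arrival function is
monotone and arrival is not before departure. -/
def FIFO {V : Type*} (A : V → V → ℝ≥0∞ → ℝ≥0∞) : Prop :=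
  ∀ u v : V, Monotone (A u v) ∧ ∀ t, t ≤ A u v t

theorem walkArr_mono {V : Type*} {A : V → V → ℝ≥0∞ → ℝ≥0∞} (hA : FIFO A) (u : V)
    (l : List V) : Monotone (walkArr A u l) := by
  induction l generalizing u with
  | nil => exact monotone_id
  | cons v l ih => intro a b h; exact ih v ((hA u v).1 h)

theorem le_walkArr {V : Type*} {A : V → V → ℝ≥0∞ → ℝ≥0∞} (hA : FIFO A) (u : V)
    (l : List V) (t : ℝ≥0∞) : t ≤ walkArr A u l t := by
  induction l generalizing u t with
  | nil => exact le_rfl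
  | cons v l ih => exact le_trans ((hA u v).2 t) (ih v _)

theorem walkArr_append {V : Type*} (A : V → V → ℝ≥0∞ → ℝ≥0∞) (u : V)
    (l₁ l₂ : List V) (t : ℝ≥0∞) :
    walkArr A u (l₁ ++ l₂) t
      = walkArr A ((u :: l₁).getLast (List.cons_ne_nil _ _)) l₂ (walkArr A u l₁ t) := by
  induction l₁ generalizing u t with
  | nil => simp [walkArr]
  | cons v l₁ ih => simp [walkArr, ih, List.getLast_cons]

theorem shorten {V : Type*} {A : V → V → ℝ≥0∞ → ℝ≥0∞} (hA : FIFO A) :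
    ∀ (n : ℕ) (l : List V), l.length ≤ n → ∀ (u : V) (t : ℝ≥0∞),
    ∃ l' : List V, l' ⊆ l ∧
      (u :: l').getLast (List.cons_ne_nil _ _) = (u :: l).getLast (List.cons_ne_nil _ _) ∧
      (u :: l').Nodup ∧ walkArr A u l' t ≤ walkArr A u l t := by
  intro n
  induction n with
  | zero =>
    intro l hl u t
    rw [Nat.le_zero, List.length_eq_zero_iff] at hl
    subst hl
    exact ⟨[], by simp, rfl, by simp, le_rfl⟩
  | succ n ih =>
    intro l hl u t
    by_cases h : (u :: l).Nodup
    · exact ⟨l, fun x hx => hx, rfl, h, le_rfl⟩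
    by_cases hu : u ∈ l
    · obtain ⟨q, r, rfl⟩ := List.append_of_mem hu
      have hr : r.length ≤ n := by
        have := hl
        simp only [List.length_append, List.length_cons] at this
        omega
      obtain ⟨r', hsub, hlast, hnd, hle⟩ := ih r hr u t
      refine ⟨r', fun x hx => by simp [hsub hx], ?_, hnd, ?_⟩
      · rw [hlast]
        have heq : u :: (q ++ u :: r) = (u :: q) ++ (u :: r) := by simp
        rw [List.getLast_congr _ _ heq, List.getLast_append] <;> simp
      · have h1 : q ++ u :: r = (q ++ [u]) ++ r := by simp
        rw [h1, walkArr_append]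
        have h2 : ((u :: (q ++ [u])).getLast (List.cons_ne_nil _ _)) = u := by
          have heq : u :: (q ++ [u]) = (u :: q) ++ [u] := by simp
          rw [List.getLast_congr _ _ heq, List.getLast_append] <;> simp
        rw [h2]
        exact hle.trans (walkArr_mono hA u r (le_walkArr hA u (q ++ [u]) t))
    · rcases l with _ | ⟨v, m⟩
      · simp at h
      have hm : m.length ≤ n := by simpa using hl
      obtain ⟨m', hsub, hlast, hnd, hle⟩ := ih m hm v (A u v t)
      have hsub' : v :: m' ⊆ v :: m := List.cons_subset_cons v hsub
      refine ⟨v :: m', hsub', ?_, ?_, hle⟩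
      · rw [List.getLast_cons (List.cons_ne_nil _ _), List.getLast_cons (List.cons_ne_nil _ _)]
        exact hlast
      · exact List.nodup_cons.mpr ⟨fun hmem => hu (hsub' hmem), hnd⟩

/-- The end-to-end arrival function value equals the infimum (in fact, the attained
minimum) of the arrival functions of the finitely many walks with no repeated
vertices. -/
theorem endToEnd_eq_min_over_nodup_walks {V : Type*} [Fintype V]
    (A : V → V → ℝ≥0∞ → ℝ≥0∞) (hA : FIFO A) (s d : V) (t : ℝ≥0∞) :
    (endToEnd A s d t =
      ⨅ l : {l : List V // IsWalkTo s d l ∧ (s :: l).Nodup}, walkArr A s l.1 t) ∧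
    ∃ l : List V, IsWalkTo s d l ∧ (s :: l).Nodup ∧
      walkArr A s l t = endToEnd A s d t := by

  have hne : Nonempty {l : List V // IsWalkTo s d l ∧ (s :: l).Nodup} := by
    by_cases hsd : s = d
    · exact ⟨⟨[], hsd, by simp⟩⟩
    · exact ⟨⟨[d], by simp [IsWalkTo], by simp [hsd]⟩⟩
  have hfin : Finite {l : List V // IsWalkTo s d l ∧ (s :: l).Nodup} := by
    have hset : Finite {l : List V // l.length ≤ Fintype.card V} :=
      (List.finite_length_le V (Fintype.card V)).to_subtype
    refine Finite.of_injective (β := {l : List V // l.length ≤ Fintype.card V})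
      (fun l => ⟨l.1, ?_⟩) ?_
    · have := l.2.2.length_le_card
      simp only [List.length_cons] at this
      omega
    · intro a b hab
      simp only [Subtype.mk.injEq] at hab
      exact Subtype.ext hab
  obtain ⟨lmin, hmin⟩ := Finite.exists_min
    (fun l : {l : List V // IsWalkTo s d l ∧ (s :: l).Nodup} => walkArr A s l.1 t)
  have hinf : (⨅ l : {l : List V // IsWalkTo s d l ∧ (s :: l).Nodup}, walkArr A s l.1 t)
      = walkArr A s lmin.1 t :=
    le_antisymm (iInf_le _ lmin) (le_iInf fun l => hmin l)
  have hEE : endToEnd A s d t = walkArr A s lmin.1 t := by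
    refine le_antisymm (iInf_le (fun l : {l : List V // IsWalkTo s d l} => walkArr A s l.1 t) ⟨lmin.1, lmin.2.1⟩) (le_iInf fun l => ?_)
    obtain ⟨l', hsub, hlast, hnd, hle⟩ := shorten hA l.1.length l.1 le_rfl s t
    have hw : IsWalkTo s d l' := by
      unfold IsWalkTo
      rw [hlast]
      exact l.2
    exact le_trans (hmin ⟨l', hw, hnd⟩) hle
  exact ⟨hEE.trans hinf.symm, lmin.1, lmin.2.1, lmin.2.2, hEE.symm⟩
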